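/- Under the P²-AirComp protocol, the server learns nothing about the individual messages beyond their sum: I({W_k}_{k∈[K]}; y | W) = 0, where y = √P Σ_k e_k + z, e_k = (W_k + S_k) mod 1, W = Σ_k W_k, and z is channel noise independent of everything else. -/

import Mathlib

open MeasureTheory ProbabilityTheory

/-- Zero-centered modulo: `x mod 1 := x - ⌊x + 1/2⌋`. -/
noncomputable def zmod1 (x : ℝ) : ℝ := x - ⌊x + (1 : ℝ) / 2⌋

/-- Conditional mutual information `I(X; Y | Z)`, defined as the Kullback–Leibler divergence
(expected log-likelihood ratio) between the joint law of `(Z, (X, Y))` and the conditionally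
independent coupling built from the regular conditional distributions of `X` and `Y` given
`Z`. `I(X; Y | Z) = 0` iff `X ⟂ Y | Z`. -/
noncomputable def condMutualInfo {Ω α β γ : Type*} [MeasurableSpace Ω]
    [MeasurableSpace α] [StandardBorelSpace α] [Nonempty α]
    [MeasurableSpace β] [StandardBorelSpace β] [Nonempty β]
    [MeasurableSpace γ]
    (μ : Measure Ω) [IsFiniteMeasure μ] (X : Ω → α) (Y : Ω → β) (Z : Ω → γ) : ℝ :=
  ∫ p, llr (μ.map fun ω => (Z ω, (X ω, Y ω)))
      ((μ.map Z) ⊗ₘ ((condDistrib X Z μ).prod (condDistrib Y Z μ))) p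
    ∂(μ.map fun ω => (Z ω, (X ω, Y ω)))

section Aux

open Set

lemma zmod1_meas : Measurable zmod1 := by
  unfold zmod1
  exact measurable_id.sub (measurable_from_top.comp ((measurable_id.add_const _).floor))

lemma zmod1_add_int (x : ℝ) (n : ℤ) : zmod1 (x + n) = zmod1 x := by
  unfold zmod1
  have h : x + n + 1/2 = x + 1/2 + n := by ring
  rw [h, Int.floor_add_intCast]
  push_cast; ring

lemma zmod1_eq_of_int (x y : ℝ) (h : ∃ n : ℤ, x - y = n) : zmod1 x = zmod1 y := by
  obtain ⟨n, hn⟩ := h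
  have h2 : x = y + n := by linarith
  rw [h2, zmod1_add_int]

lemma sub_zmod1_int (x : ℝ) : ∃ n : ℤ, x - zmod1 x = n := ⟨⌊x + 1/2⌋, by unfold zmod1; ring⟩

lemma zmod1_zero_int {x : ℝ} (h : zmod1 x = 0) : ∃ n : ℤ, x = n := by
  obtain ⟨n, hn⟩ := sub_zmod1_int x
  exact ⟨n, by rw [h, sub_zero] at hn; exact hn⟩

lemma zmod1_eq_toIcoMod (x : ℝ) : zmod1 x = toIcoMod one_pos (-(1/2) : ℝ) x := by
  symm
  rw [toIcoMod_eq_iff]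
  refine ⟨⟨?_, ?_⟩, ⟨⌊x + 1/2⌋, by unfold zmod1; rw [zsmul_eq_mul]; ring⟩⟩
  · have := Int.floor_le (x + 1/2); unfold zmod1; linarith
  · have := Int.lt_floor_add_one (x + 1/2); unfold zmod1; push_cast; linarith

instance zmod1_fact_one : Fact ((0:ℝ) < 1) := ⟨one_pos⟩

lemma zmod1_measurePreserving (c : ℝ) :
    MeasurePreserving (fun v => zmod1 (c + v))
      (volume.restrict (Ioc (-(1/2) : ℝ) (1/2))) (volume.restrict (Ioc (-(1/2) : ℝ) (1/2))) := by
  have ha : (-(1/2) : ℝ) + 1 = 1/2 := by norm_num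
  have hIco : MeasurableSet (Ico (-(1/2) : ℝ) (-(1/2) + 1)) := measurableSet_Ico
  have hres : volume.restrict (Ioc (-(1/2) : ℝ) (1/2))
      = volume.restrict (Ico (-(1/2) : ℝ) (-(1/2) + 1)) := by
    rw [ha]; exact (Measure.restrict_congr_set Ico_ae_eq_Ioc).symm
  have h1 : MeasurePreserving (fun v : ℝ => ((v : AddCircle (1:ℝ))))
      (volume.restrict (Ioc (-(1/2) : ℝ) (1/2))) volume := by
    have := AddCircle.measurePreserving_mk (1:ℝ) (-(1/2) : ℝ)
    rwa [ha] at this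
  have h2 : MeasurePreserving (fun y : AddCircle (1:ℝ) => (((c:ℝ) : AddCircle (1:ℝ)) + y))
      volume volume := measurePreserving_add_left volume _
  set e := AddCircle.measurableEquivIco (1:ℝ) (-(1/2) : ℝ) with he
  have hval : MeasurePreserving (Subtype.val : Ico (-(1/2):ℝ) (-(1/2)+1) → ℝ)
      (volume.comap Subtype.val) (volume.restrict (Ico (-(1/2):ℝ) (-(1/2)+1))) :=
    ⟨measurable_subtype_coe, map_comap_subtype_coe hIco _⟩
  have hsymm : MeasurePreserving e.symm (volume.comap Subtype.val) volume := by
    have hcoe : (e.symm : (Ico (-(1/2):ℝ) (-(1/2)+1)) → AddCircle (1:ℝ))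
        = (fun v : ℝ => ((v : AddCircle (1:ℝ)))) ∘ Subtype.val := rfl
    constructor
    · exact e.symm.measurable
    · rw [hcoe, ← Measure.map_map AddCircle.measurable_mk' measurable_subtype_coe,
        map_comap_subtype_coe hIco, ← hres, h1.map_eq]
  have hesymm := hsymm.symm e.symm
  rw [MeasurableEquiv.symm_symm] at hesymm
  have h3 : MeasurePreserving (fun y : AddCircle (1:ℝ) => ((e y : ℝ)))
      volume (volume.restrict (Ico (-(1/2):ℝ) (-(1/2)+1))) :=
    hval.comp hesymm
  have hcomp := (h3.comp h2).comp h1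
  have hfun : (fun v => zmod1 (c + v)) = (((fun y : AddCircle (1:ℝ) => ((e y : ℝ)))
      ∘ (fun y : AddCircle (1:ℝ) => (((c:ℝ) : AddCircle (1:ℝ)) + y)))
      ∘ (fun v : ℝ => ((v : AddCircle (1:ℝ))))) := by
    funext v
    simp only [Function.comp_apply]
    rw [zmod1_eq_toIcoMod]
    have hc : (((c:ℝ) : AddCircle (1:ℝ)) + ((v:ℝ) : AddCircle (1:ℝ)))
        = (((c + v : ℝ)) : AddCircle (1:ℝ)) := rfl
    rw [hc]
    show _ = ((AddCircle.equivIco (1:ℝ) (-(1/2):ℝ) (((c + v : ℝ)) : AddCircle (1:ℝ)) : ℝ))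
    rw [AddCircle.equivIco, QuotientAddGroup.equivIcoMod_coe]
  rw [hfun]
  nth_rewrite 2 [hres]
  exact hcomp

lemma iIndep_map_pi {Ω ι : Type*} [MeasurableSpace Ω] [Fintype ι] {E : ι → Type*}
    [∀ i, MeasurableSpace (E i)] (μ : Measure Ω) [IsProbabilityMeasure μ]
    (f : ∀ i, Ω → E i) (hmeas : ∀ i, Measurable (f i))
    (h : iIndepFun f μ) :
    μ.map (fun ω i => f i ω) = Measure.pi (fun i => μ.map (f i)) := by
  haveI : ∀ i, IsProbabilityMeasure (μ.map (f i)) :=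
    fun i => Measure.isProbabilityMeasure_map (hmeas i).aemeasurable
  refine (Measure.pi_eq fun s hs => ?_).symm
  have hF : Measurable (fun ω i => f i ω) := measurable_pi_iff.mpr hmeas
  rw [Measure.map_apply hF (MeasurableSet.univ_pi hs)]
  have hpre : (fun ω i => f i ω) ⁻¹' (univ.pi s) = ⋂ i ∈ (Finset.univ : Finset ι), f i ⁻¹' s i := by
    ext ω; simp [Set.mem_univ_pi]
  rw [hpre, (iIndepFun_iff_measure_inter_preimage_eq_mul.mp h) Finset.univ (fun i _ => hs i)]
  refine Finset.prod_congr rfl fun i _ => ?_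
  rw [Measure.map_apply (hmeas i) (hs i)]

lemma prod_map_fiberwise {α δ : Type*} [MeasurableSpace α] [MeasurableSpace δ]
    (μ : Measure α) (ν : Measure δ) [SFinite μ] [SFinite ν]
    (g : α → δ → δ) (hg : Measurable (Function.uncurry g))
    (hpres : ∀ a, Measure.map (g a) ν = ν) :
    (μ.prod ν).map (fun p => (p.1, g p.1 p.2)) = μ.prod ν := by
  have hψ : Measurable fun p : α × δ => (p.1, g p.1 p.2) := measurable_fst.prodMk hg
  ext s hs
  rw [Measure.map_apply hψ hs, Measure.prod_apply (hψ hs), Measure.prod_apply hs]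
  refine lintegral_congr fun a => ?_
  have hga : Measurable (g a) := by exact hg.comp measurable_prodMk_left
  have hset : Prod.mk a ⁻¹' ((fun p : α × δ => (p.1, g p.1 p.2)) ⁻¹' s)
      = g a ⁻¹' (Prod.mk a ⁻¹' s) := rfl
  rw [hset, ← Measure.map_apply hga (measurable_prodMk_left hs), hpres]

end Aux

section Master

variable {Ω α β γ δ : Type*} [MeasurableSpace Ω]
  [MeasurableSpace α] [StandardBorelSpace α] [Nonempty α]
  [MeasurableSpace β] [StandardBorelSpace β] [Nonempty β]
  [MeasurableSpace γ] [MeasurableSpace δ]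

/-- The kernel `z ↦ (F z)_* ν`. -/
noncomputable def mKer (F : γ → δ → β) (hF : Measurable (Function.uncurry F))
    (ν : Measure δ) [SFinite ν] : Kernel γ β where
  toFun := fun zz => ν.map (F zz)
  measurable' := by
    refine Measure.measurable_of_measurable_coe _ fun s hs => ?_
    have h1 : (fun zz => (ν.map (F zz)) s)
        = fun zz => ν (Prod.mk zz ⁻¹' (Function.uncurry F ⁻¹' s)) := by
      funext zz
      have hFz : Measurable (F zz) := by exact hF.comp measurable_prodMk_left
      rw [Measure.map_apply hFz hs]
      rfl
    rw [h1]
    exact measurable_measure_prodMk_left (hF hs)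

lemma mKer_apply (F : γ → δ → β) (hF : Measurable (Function.uncurry F))
    (ν : Measure δ) [SFinite ν] (zz : γ) : mKer F hF ν zz = ν.map (F zz) := rfl

instance mKer_isMarkov (F : γ → δ → β) (hF : Measurable (Function.uncurry F))
    (ν : Measure δ) [IsProbabilityMeasure ν] : IsMarkovKernel (mKer F hF ν) :=
  ⟨fun zz => by
    rw [mKer_apply]
    exact Measure.isProbabilityMeasure_map (hF.comp measurable_prodMk_left).aemeasurable⟩

lemma joint_eq_coupling (μ : Measure Ω) [IsProbabilityMeasure μ]
    (X : Ω → α) (V : Ω → δ) (φ : α → γ) (F : γ → δ → β)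
    (hX : Measurable X) (hV : Measurable V) (hφ : Measurable φ)
    (hF : Measurable (Function.uncurry F)) (hindep : IndepFun X V μ) :
    μ.map (fun ω => (φ (X ω), (X ω, F (φ (X ω)) (V ω)))) =
      (μ.map (fun ω => φ (X ω))) ⊗ₘ
        ((condDistrib X (fun ω => φ (X ω)) μ).prod
          (condDistrib (fun ω => F (φ (X ω)) (V ω)) (fun ω => φ (X ω)) μ)) := by
  set Z : Ω → γ := fun ω => φ (X ω) with hZdef
  set Y : Ω → β := fun ω => F (Z ω) (V ω) with hYdef
  have hZ : Measurable Z := hφ.comp hX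
  have hY : Measurable Y := hF.comp (hZ.prodMk hV)
  set ν : Measure δ := μ.map V with hνdef
  haveI : IsProbabilityMeasure ν := Measure.isProbabilityMeasure_map hV.aemeasurable
  haveI : IsProbabilityMeasure (μ.map Z) := Measure.isProbabilityMeasure_map hZ.aemeasurable
  have hZX : μ.map (fun ω => (Z ω, X ω)) = (μ.map Z) ⊗ₘ condDistrib X Z μ := by
    have h1 : (μ.map (fun ω => (Z ω, X ω))).fst = μ.map Z := Measure.fst_map_prodMk hX
    exact (compProd_map_condDistrib hX.aemeasurable).symm
  have hZV : μ.map (fun ω => (Z ω, V ω)) = (μ.map Z).prod ν :=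
    (indepFun_iff_map_prod_eq_prod_map_map hZ.aemeasurable hV.aemeasurable).mp
      (hindep.comp hφ measurable_id)
  have hκY : μ.map (fun ω => (Z ω, Y ω)) = (μ.map Z) ⊗ₘ mKer F hF ν := by
    have hψ : Measurable fun p : γ × δ => (p.1, F p.1 p.2) := measurable_fst.prodMk hF
    have hmap : μ.map (fun ω => (Z ω, Y ω))
        = (μ.map (fun ω => (Z ω, V ω))).map (fun p => (p.1, F p.1 p.2)) := by
      rw [Measure.map_map hψ (hZ.prodMk hV)]
      rfl
    rw [hmap, hZV]
    ext s hs
    rw [Measure.map_apply hψ hs, Measure.prod_apply (hψ hs), Measure.compProd_apply hs]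
    refine lintegral_congr fun zz => ?_
    have hFz : Measurable (F zz) := by exact hF.comp measurable_prodMk_left
    rw [mKer_apply, Measure.map_apply hFz (measurable_prodMk_left hs)]
    rfl
  have hae : ∀ᵐ zz ∂(μ.map Z), mKer F hF ν zz = condDistrib Y Z μ zz :=
    (condDistrib_ae_eq_of_measure_eq_compProd Z hY.aemeasurable hκY).symm
  have hh : Measurable fun q : (γ × α) × δ => (q.1.1, (q.1.2, F q.1.1 q.2)) :=
    (measurable_fst.comp measurable_fst).prodMk
      ((measurable_snd.comp measurable_fst).prodMk
        (hF.comp ((measurable_fst.comp measurable_fst).prodMk measurable_snd)))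
  have hXZV : μ.map (fun ω => ((Z ω, X ω), V ω)) = (μ.map (fun ω => (Z ω, X ω))).prod ν :=
    (indepFun_iff_map_prod_eq_prod_map_map (hZ.prodMk hX).aemeasurable hV.aemeasurable).mp
      (hindep.comp (hφ.prodMk measurable_id) measurable_id)
  have hmain : μ.map (fun ω => (Z ω, (X ω, Y ω)))
      = (μ.map Z) ⊗ₘ ((condDistrib X Z μ).prod (mKer F hF ν)) := by
    have hmap : μ.map (fun ω => (Z ω, (X ω, Y ω)))
        = (μ.map (fun ω => ((Z ω, X ω), V ω))).map
            (fun q => (q.1.1, (q.1.2, F q.1.1 q.2))) := by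
      rw [Measure.map_map hh ((hZ.prodMk hX).prodMk hV)]
      rfl
    rw [hmap, hXZV, hZX]
    ext s hs
    rw [Measure.map_apply hh hs, Measure.prod_apply (hh hs),
      Measure.lintegral_compProd (measurable_measure_prodMk_left (hh hs)),
      Measure.compProd_apply hs]
    refine lintegral_congr fun zz => ?_
    rw [Kernel.prod_apply, Measure.prod_apply (measurable_prodMk_left hs)]
    refine lintegral_congr fun x => ?_
    have hFz : Measurable (F zz) := by exact hF.comp measurable_prodMk_left
    rw [mKer_apply,
      Measure.map_apply hFz (measurable_prodMk_left (measurable_prodMk_left hs))]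
    rfl
  rw [hmain]
  refine (Measure.compProd_congr ?_).symm
  filter_upwards [hae] with zz hz
  rw [Kernel.prod_apply, Kernel.prod_apply, hz]

lemma condMutualInfo_eq_zero_of_indep (μ : Measure Ω) [IsProbabilityMeasure μ]
    (X : Ω → α) (Y : Ω → β) (Z : Ω → γ) (V : Ω → δ) (φ : α → γ) (F : γ → δ → β)
    (hX : Measurable X) (hV : Measurable V) (hφ : Measurable φ)
    (hF : Measurable (Function.uncurry F)) (hindep : IndepFun X V μ)
    (hYeq : Y = fun ω => F (φ (X ω)) (V ω)) (hZeq : Z = fun ω => φ (X ω)) :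
    condMutualInfo μ X Y Z = 0 := by
  subst hYeq hZeq
  have hJ := joint_eq_coupling μ X V φ F hX hV hφ hF hindep
  rw [condMutualInfo, ← hJ]
  set J := μ.map (fun ω => (φ (X ω), (X ω, F (φ (X ω)) (V ω)))) with hJdef
  haveI : IsProbabilityMeasure J := Measure.isProbabilityMeasure_map
    (((hφ.comp hX).prodMk (hX.prodMk (hF.comp ((hφ.comp hX).prodMk hV)))).aemeasurable)
  have h0 : ∀ᵐ p ∂J, llr J J p = 0 := by
    filter_upwards [Measure.rnDeriv_self J] with p hp
    rw [llr, hp]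
    simp
  rw [integral_congr_ae h0, integral_zero]

end Master

/-- Perfect privacy at the server in P²-AirComp: the server's observation
`y = √P Σ_k e_k + z`, with `e_k = (W_k + S_k) mod 1`, reveals nothing about the individual
messages beyond their sum, i.e. `I({W_k}; y | W) = 0` where `W = Σ_k W_k`. -/
theorem server_perfect_privacy
    {Ω : Type*} [MeasurableSpace Ω]
    (μ : Measure Ω) [IsProbabilityMeasure μ]
    (K D : ℕ) (P : ℝ) (hP : 0 < P) (N0 : NNReal) (hN0 : N0 ≠ 0)
    (W S : Fin K → Ω → Fin D → ℝ) (z : Ω → Fin D → ℝ)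
    (hWmeas : ∀ k, Measurable (W k)) (hSmeas : ∀ k, Measurable (S k))
    (hzmeas : Measurable z)
    -- each key is uniform on the torus cell `(-1/2, 1/2]^D`
    (hSunif : ∀ k, μ.map (S k) =
      Measure.pi fun _ : Fin D => volume.restrict (Set.Ioc (-(1 / 2) : ℝ) (1 / 2)))
    -- modulo-zero-sum condition
    (hzero : ∀ ω d, zmod1 (∑ k, S k ω d) = 0)
    -- any `K-1` keys are mutually independent
    (hK1indep : ∀ k0 : Fin K,
      iIndepFun (fun i : {k : Fin K // k ≠ k0} => S i) μ)
    -- keys are independent of the messages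
    (hWSindep : IndepFun (fun ω (k : Fin K) => W k ω) (fun ω (k : Fin K) => S k ω) μ)
    -- channel noise `z ~ N(0, N_0 I_D)`, independent of messages and keys
    (hzlaw : μ.map z = Measure.pi fun _ : Fin D => gaussianReal 0 N0)
    (hzindep : IndepFun z (fun ω => (fun k : Fin K => W k ω, fun k : Fin K => S k ω)) μ) :
    condMutualInfo μ
      (fun ω (k : Fin K) => W k ω)
      (fun ω (d : Fin D) => Real.sqrt P * ∑ k, zmod1 (W k ω d + S k ω d) + z ω d)
      (fun ω (d : Fin D) => ∑ k, W k ω d) = 0 := by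
  classical
  set X : Ω → Fin K → Fin D → ℝ := fun ω k => W k ω with hXdef
  have hX : Measurable X := measurable_pi_lambda _ fun k => hWmeas k
  set φ : (Fin K → Fin D → ℝ) → (Fin D → ℝ) := fun a d => ∑ k, a k d with hφdef
  have hφ : Measurable φ := measurable_pi_lambda _ fun d =>
    Finset.measurable_sum _ fun k _ => (measurable_pi_apply d).comp (measurable_pi_apply k)
  rcases Nat.eq_zero_or_pos K with hK | hK
  · -- K = 0 : Y = z, trivial case
    subst hK
    refine condMutualInfo_eq_zero_of_indep μ X _ _ z φ
      (fun ζ n => fun d => Real.sqrt P * 0 + n d) hX hzmeas hφ ?_ ?_ ?_ ?_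
    · apply measurable_pi_lambda _ fun d => ?_
      exact (measurable_const.const_mul _).add
        ((measurable_pi_apply d).comp measurable_snd)
    · exact (hzindep.comp measurable_id measurable_fst).symm
    · funext ω
      funext d
      simp
    · rfl
  · -- K ≥ 1
    set k0 : Fin K := ⟨0, hK⟩ with hk0def
    set u : Measure ℝ := volume.restrict (Set.Ioc (-(1 / 2) : ℝ) (1 / 2)) with hudef
    set uD : Measure (Fin D → ℝ) := Measure.pi fun _ : Fin D => u with huDdef
    set π : Measure ({k : Fin K // k ≠ k0} → Fin D → ℝ) :=
      Measure.pi fun _ => uD with hπdef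
    set E : Ω → {k : Fin K // k ≠ k0} → Fin D → ℝ :=
      fun ω i d => zmod1 (W i.1 ω d + S i.1 ω d) with hEdef
    set V : Ω → ({k : Fin K // k ≠ k0} → Fin D → ℝ) × (Fin D → ℝ) :=
      fun ω => (E ω, z ω) with hVdef
    set F : (Fin D → ℝ) → ({k : Fin K // k ≠ k0} → Fin D → ℝ) × (Fin D → ℝ) → Fin D → ℝ :=
      fun ζ p d => Real.sqrt P * ((∑ i, p.1 i d) + zmod1 (ζ d - ∑ i, p.1 i d)) + p.2 d
      with hFdef
    have hE : Measurable E := measurable_pi_lambda _ fun i => measurable_pi_lambda _ fun d =>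
      zmod1_meas.comp (((measurable_pi_apply d).comp (hWmeas i.1)).add
        ((measurable_pi_apply d).comp (hSmeas i.1)))
    have hV : Measurable V := hE.prodMk hzmeas
    have hsum : ∀ d, Measurable fun p : ({k : Fin K // k ≠ k0} → Fin D → ℝ) × (Fin D → ℝ) =>
        ∑ i, p.1 i d := fun d => Finset.measurable_sum _ fun i _ =>
      (measurable_pi_apply d).comp ((measurable_pi_apply i).comp measurable_fst)
    have hF : Measurable (Function.uncurry F) := by
      apply measurable_pi_lambda _ fun d => ?_
      have h1 : Measurable fun q : (Fin D → ℝ) ×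
          (({k : Fin K // k ≠ k0} → Fin D → ℝ) × (Fin D → ℝ)) => ∑ i, q.2.1 i d :=
        Finset.measurable_sum _ fun i _ =>
          (measurable_pi_apply d).comp ((measurable_pi_apply i).comp
            (measurable_fst.comp measurable_snd))
      have h2 : Measurable fun q : (Fin D → ℝ) ×
          (({k : Fin K // k ≠ k0} → Fin D → ℝ) × (Fin D → ℝ)) => q.1 d :=
        (measurable_pi_apply d).comp measurable_fst
      exact ((h1.add (zmod1_meas.comp (h2.sub h1))).const_mul _).add
        ((measurable_pi_apply d).comp (measurable_snd.comp measurable_snd))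
    -- the splitting of sums over `Fin K`
    have hsplit : ∀ (f : Fin K → ℝ), ∑ k, f k = f k0 + ∑ i : {k : Fin K // k ≠ k0}, f i.1 := by
      intro f
      rw [← Finset.add_sum_erase _ f (Finset.mem_univ k0)]
      congr 1
      exact Finset.sum_subtype _ (fun x => by simp) f
    haveI huprob : IsProbabilityMeasure u :=
      ⟨by rw [hudef, Measure.restrict_apply_univ, Real.volume_Ioc]; norm_num⟩
    haveI huDprob : IsProbabilityMeasure uD := by rw [huDdef]; infer_instance
    haveI hπprob : IsProbabilityMeasure π := by rw [hπdef]; infer_instance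
    haveI : IsProbabilityMeasure (μ.map X) := Measure.isProbabilityMeasure_map hX.aemeasurable
    haveI : IsProbabilityMeasure (μ.map z) := Measure.isProbabilityMeasure_map hzmeas.aemeasurable
    -- the law of the selected keys is the product of uniforms
    set B : Ω → {k : Fin K // k ≠ k0} → Fin D → ℝ := fun ω i => S i.1 ω with hBdef
    have hB : Measurable B := measurable_pi_lambda _ fun i => hSmeas i.1
    have hBlaw : μ.map B = π := by
      have h1 := iIndep_map_pi μ (fun i : {k : Fin K // k ≠ k0} => S i.1)
        (fun i => hSmeas i.1) (hK1indep k0)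
      rw [hπdef]
      rw [show (fun ω (i : {k : Fin K // k ≠ k0}) => S i.1 ω) = B from rfl] at h1
      rw [h1]
      congr 1
      funext i
      exact hSunif i.1
    have hrestr : Measurable fun (s : Fin K → Fin D → ℝ) (i : {k : Fin K // k ≠ k0}) => s i.1 :=
      measurable_pi_lambda _ fun i => measurable_pi_apply i.1
    have hXB : IndepFun X B μ := by exact hWSindep.comp measurable_id hrestr
    have hXBlaw : μ.map (fun ω => (X ω, B ω)) = (μ.map X).prod π := by
      rw [← hBlaw]
      exact (indepFun_iff_map_prod_eq_prod_map_map hX.aemeasurable hB.aemeasurable).mp hXB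
    -- fiberwise translations preserve the product of uniforms
    set g : (Fin K → Fin D → ℝ) → ({k : Fin K // k ≠ k0} → Fin D → ℝ) →
        ({k : Fin K // k ≠ k0} → Fin D → ℝ) := fun x b i d => zmod1 (x i.1 d + b i d) with hgdef
    have hg : Measurable (Function.uncurry g) := by
      apply measurable_pi_lambda
      intro i
      apply measurable_pi_lambda
      intro d
      exact zmod1_meas.comp (by fun_prop)
    have hpres : ∀ x, π.map (g x) = π := by
      intro x
      rw [hπdef, huDdef, hudef]
      exact (measurePreserving_pi _ _ (fun (i : {k : Fin K // k ≠ k0}) =>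
        measurePreserving_pi _ _
          (fun (d : Fin D) => zmod1_measurePreserving (x i.1 d)))).map_eq
    have hXE : μ.map (fun ω => (X ω, E ω)) = (μ.map X).prod π := by
      have hψ2 : Measurable fun p : (Fin K → Fin D → ℝ) × ({k : Fin K // k ≠ k0} → Fin D → ℝ) =>
          (p.1, g p.1 p.2) := by exact measurable_fst.prodMk hg
      have hmap : μ.map (fun ω => (X ω, E ω))
          = (μ.map (fun ω => (X ω, B ω))).map (fun p => (p.1, g p.1 p.2)) := by
        rw [Measure.map_map hψ2 (hX.prodMk hB)]
        rfl
      rw [hmap, hXBlaw, prod_map_fiberwise _ _ g hg hpres]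
    have hElaw : μ.map E = π := by
      have h1 : μ.map E = (μ.map (fun ω => (X ω, E ω))).snd := by
        rw [Measure.snd, Measure.map_map measurable_snd (hX.prodMk hE)]
        rfl
      rw [h1, hXE, Measure.snd_prod]
    have hXEz : IndepFun (fun ω => (X ω, E ω)) z μ := by
      have hm : Measurable fun p : (Fin K → Fin D → ℝ) × (Fin K → Fin D → ℝ) =>
          (p.1, fun (i : {k : Fin K // k ≠ k0}) (d : Fin D) => zmod1 (p.1 i.1 d + p.2 i.1 d)) :=
        measurable_fst.prodMk (measurable_pi_lambda _ fun i => measurable_pi_lambda _ fun d =>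
          zmod1_meas.comp (by fun_prop))
      exact hzindep.symm.comp hm measurable_id
    have hXEzlaw : μ.map (fun ω => ((X ω, E ω), z ω)) = ((μ.map X).prod π).prod (μ.map z) := by
      rw [← hXE]
      exact (indepFun_iff_map_prod_eq_prod_map_map
        (hX.prodMk hE).aemeasurable hzmeas.aemeasurable).mp hXEz
    have hEz : IndepFun E z μ := hXEz.comp measurable_snd measurable_id
    have hVlaw : μ.map V = π.prod (μ.map z) := by
      rw [← hElaw]
      exact (indepFun_iff_map_prod_eq_prod_map_map hE.aemeasurable hzmeas.aemeasurable).mp hEz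
    have hXV : μ.map (fun ω => (X ω, V ω)) = (μ.map X).prod (μ.map V) := by
      have hassoc : μ.map (fun ω => (X ω, V ω))
          = (μ.map (fun ω => ((X ω, E ω), z ω))).map MeasurableEquiv.prodAssoc := by
        rw [Measure.map_map MeasurableEquiv.prodAssoc.measurable
          ((hX.prodMk hE).prodMk hzmeas)]
        rfl
      rw [hassoc, hXEzlaw, Measure.prodAssoc_prod, hVlaw]
    have hindep : IndepFun X V μ :=
      (indepFun_iff_map_prod_eq_prod_map_map hX.aemeasurable hV.aemeasurable).mpr hXV
    -- conclude
    refine condMutualInfo_eq_zero_of_indep μ X _ _ V φ F hX hV hφ hF hindep ?_ rfl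
    funext ω
    funext d
    set T : ℝ := ∑ i : {k : Fin K // k ≠ k0}, zmod1 (W i.1 ω d + S i.1 ω d) with hTdef
    show Real.sqrt P * ∑ k, zmod1 (W k ω d + S k ω d) + z ω d
      = Real.sqrt P * (T + zmod1 ((∑ k, W k ω d) - T)) + z ω d
    have hsW := hsplit (fun k => W k ω d)
    have hsS := hsplit (fun k => S k ω d)
    obtain ⟨N, hN⟩ := zmod1_zero_int (hzero ω d)
    have hTz : ∃ M : ℤ, T - ∑ i : {k : Fin K // k ≠ k0}, (W i.1 ω d + S i.1 ω d) = M := by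
      refine ⟨-∑ i : {k : Fin K // k ≠ k0}, ⌊W i.1 ω d + S i.1 ω d + 1/2⌋, ?_⟩
      rw [hTdef, ← Finset.sum_sub_distrib]
      push_cast
      rw [← Finset.sum_neg_distrib]
      exact Finset.sum_congr rfl fun i _ => by unfold zmod1; push_cast; ring
    obtain ⟨M, hM⟩ := hTz
    have hadd : ∑ i : {k : Fin K // k ≠ k0}, (W i.1 ω d + S i.1 ω d)
        = (∑ i : {k : Fin K // k ≠ k0}, W i.1 ω d)
          + ∑ i : {k : Fin K // k ≠ k0}, S i.1 ω d := Finset.sum_add_distrib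
    have hkey : zmod1 (W k0 ω d + S k0 ω d) = zmod1 ((∑ k, W k ω d) - T) := by
      apply zmod1_eq_of_int
      refine ⟨N + M, ?_⟩
      push_cast
      linarith [hsW, hsS, hN, hM, hadd]
    rw [hsplit (fun k => zmod1 (W k ω d + S k ω d)), hkey]
    ring
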